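/- Let f(z) = 1/z + e^z, g(z) = 1/z + z e^z and α(z) = 1/z, meromorphic on ℂ. Then: (i) on ℂ ∖ {0} the functions f − α = e^z and g − α = z e^z have no zeros, and at z = 0 both f and g have poles, so f and g share α IM in the sense of value; (ii) 1/f − z = −z² e^z/(1 + z e^z) has a zero of order exactly 2 at z = 0 while 1/g − z = −z³ e^z/(1 + z² e^z) has a zero of order exactly 3 at z = 0, so f and g do not share α CM in the sense of value; (iii) g − α = z e^z vanishes at z = 0 while f − α = e^z does not, so f and g do not share α in the sense of vanishing. -/

import Mathlib

open Complex Topology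
open scoped Classical

/-- The order of a meromorphic function at a point (junk value `0` if `f` is
not meromorphic at `z`).  Order `⊤` means `f ≡ 0` near `z`, a positive order
is the multiplicity of a zero, a negative order is minus the multiplicity of
a pole. -/
noncomputable def morder (f : ℂ → ℂ) (z : ℂ) : WithTop ℤ :=
  if h : MeromorphicAt f z then meromorphicOrderAt f z else 0

/-- `f(z) = α(z)` in the sense of value: at a pole of `α` it means that `f`
also has a pole at `z`; elsewhere it means that the meromorphic function
`f - α` vanishes at `z`. -/
def ValueEqAt (f α : ℂ → ℂ) (z : ℂ) : Prop :=
  (morder α z < 0 ∧ morder f z < 0) ∨ (0 ≤ morder α z ∧ 0 < morder (f - α) z)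

/-- `f` and `g` share the function `α` IM in the sense of value on `D`. -/
def ShareIMValue (f g α : ℂ → ℂ) (D : Set ℂ) : Prop :=
  ∀ z ∈ D, (ValueEqAt f α z ↔ ValueEqAt g α z)

/-- `f` and `g` share the function `α` CM in the sense of value on `D`:
at points where `α` is finite the orders of the zeros of `f - α` and `g - α`
agree, and at poles of `α` the orders of the zeros of `1/f - 1/α` and
`1/g - 1/α` agree. -/
def ShareCMValue (f g α : ℂ → ℂ) (D : Set ℂ) : Prop :=
  ∀ z ∈ D,
    (0 ≤ morder α z → ∀ m : ℕ, 1 ≤ m →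
      (morder (f - α) z = (m : ℤ) ↔ morder (g - α) z = (m : ℤ))) ∧
    (morder α z < 0 → ∀ m : ℕ, 1 ≤ m →
      (morder (f⁻¹ - α⁻¹) z = (m : ℤ) ↔ morder (g⁻¹ - α⁻¹) z = (m : ℤ)))

/-- `f` and `g` share the function `α` IM in the sense of vanishing on `D`:
`f - α` and `g - α` have the same zeros (ignoring multiplicities). -/
def ShareIMVanishing (f g α : ℂ → ℂ) (D : Set ℂ) : Prop :=
  ∀ z ∈ D, (0 < morder (f - α) z ↔ 0 < morder (g - α) z)

/-- `f` and `g` share the function `α` CM in the sense of vanishing on `D`: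
`f - α` and `g - α` have the same zeros with the same multiplicities. -/
def ShareCMVanishing (f g α : ℂ → ℂ) (D : Set ℂ) : Prop :=
  ∀ z ∈ D, ∀ m : ℕ, 1 ≤ m →
    (morder (f - α) z = (m : ℤ) ↔ morder (g - α) z = (m : ℤ))


private lemma morder_eq {f : ℂ → ℂ} {z : ℂ} (hf : MeromorphicAt f z) (n : ℤ)
    (g : ℂ → ℂ) (hg : AnalyticAt ℂ g z) (hgz : g z ≠ 0)
    (h : ∀ᶠ w in 𝓝[≠] z, f w = (w - z) ^ n * g w) : morder f z = n := by
  rw [morder, dif_pos hf, meromorphicOrderAt_eq_int_iff hf]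
  exact ⟨g, hg, hgz, by simpa [smul_eq_mul] using h⟩

/-- Example 7: `f = 1/z + e^z` and `g = 1/z + z e^z` share
`α = 1/z` IM in the sense of value (on `ℂ ∖ {0}` the differences `e^z` and
`z e^z` have no zeros, and at `0` both `f` and `g` have poles), but not CM in
the sense of value (`1/f - z` has a zero of order `2` at `0` while `1/g - z`
has a zero of order `3`), and they do not share `α` in the sense of vanishing
(`g - α = z e^z` vanishes at `0` while `f - α = e^z` does not). -/
theorem example_seven (f g α : ℂ → ℂ)
    (hfdef : f = fun z => z⁻¹ + exp z)
    (hgdef : g = fun z => z⁻¹ + z * exp z)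
    (hαdef : α = fun z => z⁻¹) :
    (∀ z, f z - α z = exp z) ∧
    (∀ z, g z - α z = z * exp z) ∧
    (∀ z ≠ (0 : ℂ), ¬ 0 < morder (f - α) z ∧ ¬ 0 < morder (g - α) z) ∧
    morder f 0 < 0 ∧ morder g 0 < 0 ∧
    ShareIMValue f g α Set.univ ∧
    morder (f⁻¹ - α⁻¹) 0 = (2 : ℤ) ∧
    morder (g⁻¹ - α⁻¹) 0 = (3 : ℤ) ∧
    ¬ ShareCMValue f g α Set.univ ∧
    0 < morder (g - α) 0 ∧
    ¬ 0 < morder (f - α) 0 ∧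
    ¬ ShareIMVanishing f g α Set.univ := by
  subst hfdef hgdef hαdef
  set F : ℂ → ℂ := fun z => z⁻¹ + exp z with hF
  set G : ℂ → ℂ := fun z => z⁻¹ + z * exp z with hG
  set A : ℂ → ℂ := fun z => z⁻¹ with hA
  have hfa : F - A = exp := by funext w; simp [hF, hA]
  have hga : G - A = fun w => w * exp w := by
    funext w; simp [hG, hA]
  -- order of F - A = exp at any point is 0
  have hFAz : ∀ z : ℂ, morder (F - A) z = (0 : ℤ) := by
    intro z
    rw [hfa]
    exact morder_eq analyticAt_cexp.meromorphicAt 0 exp analyticAt_cexp (exp_ne_zero z)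
      (Filter.Eventually.of_forall fun w => by simp)
  -- order of G - A at nonzero points is 0, at 0 is 1
  have hGAz : ∀ z : ℂ, z ≠ 0 → morder (G - A) z = (0 : ℤ) := by
    intro z hz
    rw [hga]
    exact morder_eq (analyticAt_id.mul analyticAt_cexp).meromorphicAt 0 _
      (analyticAt_id.mul analyticAt_cexp) (by simp [hz, exp_ne_zero])
      (Filter.Eventually.of_forall fun w => by simp)
  have hGA0 : morder (G - A) 0 = (1 : ℤ) := by
    rw [hga]
    exact morder_eq (analyticAt_id.mul analyticAt_cexp).meromorphicAt 1 exp analyticAt_cexp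
      (by simp [exp_ne_zero])
      (Filter.Eventually.of_forall fun w => by simp)
  -- orders of A
  have hA0 : morder A 0 = (-1 : ℤ) := by
    apply morder_eq (MeromorphicAt.id 0).inv (-1) (fun _ => 1) analyticAt_const one_ne_zero
    filter_upwards [self_mem_nhdsWithin] with w hw
    have hw' : w ≠ 0 := hw
    simp [hA, zpow_neg_one]
  have hAz : ∀ z : ℂ, z ≠ 0 → morder A z = (0 : ℤ) := by
    intro z hz
    exact morder_eq (MeromorphicAt.id z).inv 0 A (analyticAt_id.inv hz)
      (by simp [hA, hz]) (Filter.Eventually.of_forall fun w => by simp [hA])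
  -- orders of F and G at 0
  have hF0 : morder F 0 = (-1 : ℤ) := by
    have hm : MeromorphicAt F 0 := (MeromorphicAt.id 0).inv.add analyticAt_cexp.meromorphicAt
    apply morder_eq hm (-1) (fun w => 1 + w * exp w)
      (analyticAt_const.add (analyticAt_id.mul analyticAt_cexp)) (by simp)
    filter_upwards [self_mem_nhdsWithin] with w hw
    have hw' : w ≠ 0 := hw
    simp only [hF, sub_zero, zpow_neg_one]
    field_simp
  have hG0 : morder G 0 = (-1 : ℤ) := by
    have hm : MeromorphicAt G 0 :=
      (MeromorphicAt.id 0).inv.add ((analyticAt_id.mul analyticAt_cexp).meromorphicAt)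
    apply morder_eq hm (-1) (fun w => 1 + w ^ 2 * exp w)
      (analyticAt_const.add ((analyticAt_id.pow 2).mul analyticAt_cexp)) (by simp)
    filter_upwards [self_mem_nhdsWithin] with w hw
    have hw' : w ≠ 0 := hw
    simp only [hG, sub_zero, zpow_neg_one]
    field_simp
  -- order of F⁻¹ - A⁻¹ at 0 is 2
  have hFinv : morder (F⁻¹ - A⁻¹) 0 = (2 : ℤ) := by
    have hm : MeromorphicAt (F⁻¹ - A⁻¹) 0 :=
      ((MeromorphicAt.id 0).inv.add analyticAt_cexp.meromorphicAt).inv.sub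
        (MeromorphicAt.id 0).inv.inv
    have hd : AnalyticAt ℂ (fun w : ℂ => 1 + w * exp w) 0 :=
      analyticAt_const.add (analyticAt_id.mul analyticAt_cexp)
    have hne : ∀ᶠ w in 𝓝 (0:ℂ), 1 + w * exp w ≠ 0 := hd.continuousAt.eventually_ne (by simp)
    apply morder_eq hm 2 (fun w => -(exp w) / (1 + w * exp w))
      ((analyticAt_cexp.neg).div hd (by simp)) (by simp)
    filter_upwards [self_mem_nhdsWithin, nhdsWithin_le_nhds hne] with w hw hnw
    have hw' : w ≠ 0 := hw
    have h2 : w⁻¹ + exp w = (1 + w * exp w) / w := by field_simp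
    have h3 : (w - 0 : ℂ) ^ (2:ℤ) = w ^ 2 := by rw [sub_zero, zpow_two, sq]
    simp only [Pi.sub_apply, Pi.inv_apply, hF, hA, h2, inv_inv, inv_div, h3]
    field_simp
    ring
  -- order of G⁻¹ - A⁻¹ at 0 is 3
  have hGinv : morder (G⁻¹ - A⁻¹) 0 = (3 : ℤ) := by
    have hm : MeromorphicAt (G⁻¹ - A⁻¹) 0 :=
      ((MeromorphicAt.id 0).inv.add ((analyticAt_id.mul analyticAt_cexp).meromorphicAt)).inv.sub
        (MeromorphicAt.id 0).inv.inv
    have hd : AnalyticAt ℂ (fun w : ℂ => 1 + w ^ 2 * exp w) 0 :=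
      analyticAt_const.add ((analyticAt_id.pow 2).mul analyticAt_cexp)
    have hne : ∀ᶠ w in 𝓝 (0:ℂ), 1 + w ^ 2 * exp w ≠ 0 := hd.continuousAt.eventually_ne (by simp)
    apply morder_eq hm 3 (fun w => -(exp w) / (1 + w ^ 2 * exp w))
      ((analyticAt_cexp.neg).div hd (by simp)) (by simp)
    filter_upwards [self_mem_nhdsWithin, nhdsWithin_le_nhds hne] with w hw hnw
    have hw' : w ≠ 0 := hw
    have h2 : w⁻¹ + w * exp w = (1 + w ^ 2 * exp w) / w := by field_simp
    have h3 : (w - 0 : ℂ) ^ (3:ℤ) = w ^ 3 := by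
      rw [sub_zero, show (3:ℤ) = ((3:ℕ):ℤ) from rfl, zpow_natCast]
    simp only [Pi.sub_apply, Pi.inv_apply, hG, hA, h2, inv_inv, inv_div, h3]
    field_simp
    ring
  -- numeric facts in WithTop ℤ
  have c1 : ((-1 : ℤ) : WithTop ℤ) < 0 := by exact_mod_cast (by norm_num : (-1:ℤ) < (0:ℤ))
  have c2 : ¬ ((0 : ℤ) : WithTop ℤ) < 0 := by
    simp only [not_lt]; exact_mod_cast (by norm_num : (0:ℤ) ≤ (0:ℤ))
  have c3 : ¬ (0 : WithTop ℤ) < ((0 : ℤ) : WithTop ℤ) := by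
    simp only [not_lt]; exact_mod_cast (by norm_num : (0:ℤ) ≤ (0:ℤ))
  have c4 : (0 : WithTop ℤ) < ((1 : ℤ) : WithTop ℤ) := by
    exact_mod_cast (by norm_num : (0:ℤ) < (1:ℤ))
  refine ⟨fun z => by simp [hF, hA], fun z => by simp [hG, hA], ?_, ?_, ?_, ?_, hFinv, hGinv,
    ?_, ?_, ?_, ?_⟩
  · intro z hz
    rw [hFAz z, hGAz z hz]
    exact ⟨c3, c3⟩
  · rw [hF0]; exact c1
  · rw [hG0]; exact c1
  · intro z _
    by_cases hz : z = 0
    · subst hz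
      constructor
      · intro _; exact Or.inl ⟨hA0 ▸ c1, hG0 ▸ c1⟩
      · intro _; exact Or.inl ⟨hA0 ▸ c1, hF0 ▸ c1⟩
    · unfold ValueEqAt
      rw [hAz z hz, hFAz z, hGAz z hz]
      simp [c2, c3]
  · intro hs
    obtain ⟨-, h2⟩ := hs 0 trivial
    have := (h2 (hA0 ▸ c1) 2 (by norm_num)).mp (by rw [hFinv]; norm_num)
    rw [hGinv] at this
    have : ((3:ℤ) : WithTop ℤ) = ((2:ℤ) : WithTop ℤ) := by exact_mod_cast this
    exact absurd (by exact_mod_cast this) (by norm_num : (3:ℤ) ≠ 2)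
  · rw [hGA0]; exact c4
  · rw [hFAz 0]; exact c3
  · intro hs
    have h := (hs 0 trivial).mpr (by rw [hGA0]; exact c4)
    rw [hFAz 0] at h
    exact c3 h
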